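/- arXiv:1807.09118 — 3 statements merged into one kernel-verified Lean document; each statement's English description precedes it below -/
import Mathlib

section
/- For all a, b, c, d ∈ GF(q) with ad − bc ≠ 0, for every λ ∈ GF(q) and every vector v ∈ GF(q)^4, one has F_λ(M(a,b,c,d)·v) = (ad − bc)² · F_λ(v); consequently, every element of the group G maps the quadric Q_λ onto itself, i.e. G stabilizes each quadric of the pencil. -/
/-!
Common setting: `PG(3,q)` as the lattice of subspaces of `V = GF(q)⁴`;
the pencil of quadrics `Q_λ : x₁x₃ - x₂² + λx₄² = 0`, the plane `π : x₄ = 0`,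
the conic `C = Q_λ ∩ π`, and the group `G ≤ PGL(4,q)` induced by the matrices
`M(a,b,c,d)`.
-/

/-- The quadratic form `F_λ(x) = x₁x₃ - x₂² + λx₄²` on `V = F⁴`. -/
def Fq (F : Type) [Field F] (lam : F) (v : Fin 4 → F) : F :=
  v 0 * v 2 - v 1 ^ 2 + lam * v 3 ^ 2

/-- The matrix `M(a,b,c,d)`. -/
def Mmat (F : Type) [Field F] (a b c d : F) : Matrix (Fin 4) (Fin 4) F :=
  !![a^2, 2*a*c, c^2, 0;
     a*b, a*d + b*c, c*d, 0;
     b^2, 2*b*d, d^2, 0;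
     0,   0,       0,   a*d - b*c]

/-- A point of `PG(3,q)`: a 1-dimensional subspace of `F⁴`. -/
def isPoint (F : Type) [Field F] (P : Submodule F (Fin 4 → F)) : Prop :=
  Module.finrank F P = 1

/-- A line of `PG(3,q)`: a 2-dimensional subspace of `F⁴`. -/
def isLine (F : Type) [Field F] (l : Submodule F (Fin 4 → F)) : Prop :=
  Module.finrank F l = 2

/-- A plane of `PG(3,q)`: a 3-dimensional subspace of `F⁴`. -/
def isPlane (F : Type) [Field F] (s : Submodule F (Fin 4 → F)) : Prop :=
  Module.finrank F s = 3

/-- The quadric `Q_λ`, as the set of points on which `F_λ` vanishes. -/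
def quadric (F : Type) [Field F] (lam : F) : Set (Submodule F (Fin 4 → F)) :=
  {P | isPoint F P ∧ ∀ v ∈ P, Fq F lam v = 0}

/-- The plane `π : x₄ = 0`. -/
def planePi (F : Type) [Field F] : Submodule F (Fin 4 → F) where
  carrier := {v | v 3 = 0}
  add_mem' := by
    intro a b ha hb
    simp only [Set.mem_setOf_eq, Pi.add_apply] at *
    rw [ha, hb, add_zero]
  zero_mem' := by simp
  smul_mem' := by
    intro c a ha
    simp only [Set.mem_setOf_eq, Pi.smul_apply, smul_eq_mul] at *
    rw [ha, mul_zero]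

/-- The point `U₄ = ⟨(0,0,0,1)⟩`. -/
def pointU4 (F : Type) [Field F] : Submodule F (Fin 4 → F) :=
  Submodule.span F {(Pi.single 3 1 : Fin 4 → F)}

/-- The conic `C = Q_λ ∩ π` (independent of `λ`). -/
def conicC (F : Type) [Field F] : Set (Submodule F (Fin 4 → F)) :=
  {P | P ∈ quadric F 0 ∧ P ≤ planePi F}

/-- The set of points of the quadric `Q_λ` lying on a subspace `l`. -/
def qpts (F : Type) [Field F] (lam : F) (l : Submodule F (Fin 4 → F)) :
    Set (Submodule F (Fin 4 → F)) :=
  {P | P ∈ quadric F lam ∧ P ≤ l}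

/-- A line is tangent to `Q_λ` if it contains exactly one of its points. -/
def tangentTo (F : Type) [Field F] (l : Submodule F (Fin 4 → F)) (lam : F) : Prop :=
  (qpts F lam l).ncard = 1

/-- A line is secant to `Q_λ` if it contains exactly two of its points. -/
def secantTo (F : Type) [Field F] (l : Submodule F (Fin 4 → F)) (lam : F) : Prop :=
  (qpts F lam l).ncard = 2

/-- A line is external to `Q_λ` if it contains none of its points. -/
def externalTo (F : Type) [Field F] (l : Submodule F (Fin 4 → F)) (lam : F) : Prop :=
  (qpts F lam l).ncard = 0

/-- `L₁`: lines of `π` tangent to `C`. -/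
def lineL1 (F : Type) [Field F] : Set (Submodule F (Fin 4 → F)) :=
  {l | isLine F l ∧ l ≤ planePi F ∧ ({P | P ∈ conicC F ∧ P ≤ l}).ncard = 1}

/-- `L₂`: lines of `π` external to `C`. -/
def lineL2 (F : Type) [Field F] : Set (Submodule F (Fin 4 → F)) :=
  {l | isLine F l ∧ l ≤ planePi F ∧ ({P | P ∈ conicC F ∧ P ≤ l}).ncard = 0}

/-- `L₃`: lines of `π` secant to `C`. -/
def lineL3 (F : Type) [Field F] : Set (Submodule F (Fin 4 → F)) :=
  {l | isLine F l ∧ l ≤ planePi F ∧ ({P | P ∈ conicC F ∧ P ≤ l}).ncard = 2}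

/-- `E`: the external points of `C` in `π` (on exactly two tangent lines of `C`). -/
def setE (F : Type) [Field F] : Set (Submodule F (Fin 4 → F)) :=
  {P | isPoint F P ∧ P ≤ planePi F ∧ P ∉ conicC F ∧
    ({m | m ∈ lineL1 F ∧ P ≤ m}).ncard = 2}

/-- `I`: the internal points of `C` in `π` (on no tangent line of `C`). -/
def setI (F : Type) [Field F] : Set (Submodule F (Fin 4 → F)) :=
  {P | isPoint F P ∧ P ≤ planePi F ∧ P ∉ conicC F ∧
    ({m | m ∈ lineL1 F ∧ P ≤ m}).ncard = 0}

/-- `L₁'`: the lines through `U₄` contained in the cone `Q₀`. -/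
def lineL1' (F : Type) [Field F] : Set (Submodule F (Fin 4 → F)) :=
  {l | isLine F l ∧ pointU4 F ≤ l ∧ ∀ v ∈ l, Fq F 0 v = 0}

/-- `L₂'`: the lines through `U₄` meeting `π` in a point of `I`. -/
def lineL2' (F : Type) [Field F] : Set (Submodule F (Fin 4 → F)) :=
  {l | isLine F l ∧ pointU4 F ≤ l ∧ (l ⊓ planePi F) ∈ setI F}

/-- `L₃'`: the lines through `U₄` meeting `π` in a point of `E`. -/
def lineL3' (F : Type) [Field F] : Set (Submodule F (Fin 4 → F)) :=
  {l | isLine F l ∧ pointU4 F ≤ l ∧ (l ⊓ planePi F) ∈ setE F}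

/-- `L₄`: the lines not through `U₄`, tangent to the cone `Q₀`, meeting `π` in a
point of `E`. -/
def lineL4 (F : Type) [Field F] : Set (Submodule F (Fin 4 → F)) :=
  {l | isLine F l ∧ ¬ pointU4 F ≤ l ∧ tangentTo F l 0 ∧ (l ⊓ planePi F) ∈ setE F}

/-- `L₄'`: the lines meeting `π` in exactly one point, lying on `C`, and secant to
every quadric `Q_λ`. -/
def lineL4' (F : Type) [Field F] : Set (Submodule F (Fin 4 → F)) :=
  {l | isLine F l ∧ (l ⊓ planePi F) ∈ conicC F ∧ ∀ lam : F, secantTo F l lam}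

/-- The collineations of `PG(3,q)` induced by the matrices `M(a,b,c,d)`,
`ad - bc ≠ 0`, acting on subspaces. -/
def Gcoll (F : Type) [Field F] : Set (Equiv.Perm (Submodule F (Fin 4 → F))) :=
  {σ | ∃ a b c d : F, a * d - b * c ≠ 0 ∧
    ∃ e : (Fin 4 → F) ≃ₗ[F] (Fin 4 → F),
      (∀ v, e v = (Mmat F a b c d).mulVec v) ∧
      ∀ W : Submodule F (Fin 4 → F), σ W = W.map e.toLinearMap}

/-- The group `G ≃ PGL(2,q)`, as a group of collineations of `PG(3,q)`. -/
def G (F : Type) [Field F] : Subgroup (Equiv.Perm (Submodule F (Fin 4 → F))) :=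
  Subgroup.closure (Gcoll F)

/-- `A = L₁' ∪ L₂' ∪ L₃ ∪ L₄'`. -/
def setA (F : Type) [Field F] : Set (Submodule F (Fin 4 → F)) :=
  lineL1' F ∪ lineL2' F ∪ lineL3 F ∪ lineL4' F

/-- `B = L₁ ∪ L₂ ∪ L₃' ∪ L₄`. -/
def setB (F : Type) [Field F] : Set (Submodule F (Fin 4 → F)) :=
  lineL1 F ∪ lineL2 F ∪ lineL3' F ∪ lineL4 F

/-- `S_ℓ`: the lines of `S` meeting the line `ℓ` (in at least a point). -/
def linesMeeting (F : Type) [Field F] (S : Set (Submodule F (Fin 4 → F)))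
    (l : Submodule F (Fin 4 → F)) : Set (Submodule F (Fin 4 → F)) :=
  {r | r ∈ S ∧ r ⊓ l ≠ ⊥}

/-- A spread of `PG(3,q)`: `q² + 1` pairwise disjoint lines. -/
def isSpread (F : Type) [Field F] (q : ℕ) (S : Set (Submodule F (Fin 4 → F))) : Prop :=
  (∀ l ∈ S, isLine F l) ∧ S.ncard = q ^ 2 + 1 ∧
    ∀ l ∈ S, ∀ l' ∈ S, l ≠ l' → l ⊓ l' = ⊥

/-- A Cameron–Liebler line class with parameter `x`: a set of lines meeting every
spread in exactly `x` lines. -/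
def isCameronLiebler (F : Type) [Field F] (q x : ℕ)
    (L : Set (Submodule F (Fin 4 → F))) : Prop :=
  (∀ l ∈ L, isLine F l) ∧ ∀ S, isSpread F q S → (L ∩ S).ncard = x

/-- `O_n`: the points off `Q_λ` at which `F_λ` evaluates to a nonsquare. -/
def setOn (F : Type) [Field F] (lam : F) : Set (Submodule F (Fin 4 → F)) :=
  {P | isPoint F P ∧ ∀ v ∈ P, v ≠ 0 → ¬ IsSquare (Fq F lam v)}

/-- `O_s`: the points off `Q_λ` at which `F_λ` evaluates to a nonzero square. -/
def setOs (F : Type) [Field F] (lam : F) : Set (Submodule F (Fin 4 → F)) :=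
  {P | isPoint F P ∧ ∀ v ∈ P, v ≠ 0 → Fq F lam v ≠ 0 ∧ IsSquare (Fq F lam v)}

/-- `T`: the tangent lines to `Q_λ` all of whose points off `Q_λ` lie in `O_n`. -/
def setT (F : Type) [Field F] (lam : F) : Set (Submodule F (Fin 4 → F)) :=
  {l | isLine F l ∧ tangentTo F l lam ∧
    ∀ P, isPoint F P → P ≤ l → P ∉ quadric F lam → P ∈ setOn F lam}

/-- `S`: the secant lines to `Q_λ`. -/
def setS (F : Type) [Field F] (lam : F) : Set (Submodule F (Fin 4 → F)) :=
  {l | isLine F l ∧ secantTo F l lam}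

/-- The symmetric bilinear form obtained by polarizing `F_λ`. -/
def polarFq (F : Type) [Field F] (lam : F) (u v : Fin 4 → F) : F :=
  Fq F lam (u + v) - Fq F lam u - Fq F lam v

theorem polarFq_eq (F : Type) [Field F] (lam : F) (u v : Fin 4 → F) :
    polarFq F lam u v =
      u 0 * v 2 + u 2 * v 0 - 2 * (u 1 * v 1) + lam * (2 * (u 3 * v 3)) := by
  simp only [polarFq, Fq, Pi.add_apply]
  ring

/-- `W^{⊥_λ}`: the orthogonal complement of a subspace `W` with respect to the
symmetric bilinear form obtained by polarizing `F_λ`. -/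
def perpLam (F : Type) [Field F] (lam : F) (W : Submodule F (Fin 4 → F)) :
    Submodule F (Fin 4 → F) where
  carrier := {v | ∀ u ∈ W, polarFq F lam u v = 0}
  add_mem' := by
    intro x y hx hy u hu
    have h1 := hx u hu
    have h2 := hy u hu
    rw [polarFq_eq] at h1 h2 ⊢
    simp only [Pi.add_apply]
    linear_combination h1 + h2
  zero_mem' := by
    intro u hu
    rw [polarFq_eq]
    simp
  smul_mem' := by
    intro c x hx u hu
    have h1 := hx u hu
    rw [polarFq_eq] at h1 ⊢
    simp only [Pi.smul_apply, smul_eq_mul]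
    linear_combination c * h1

lemma Fq_mulVec {F : Type} [Field F] (a b c d : F) (lam : F) (v : Fin 4 → F) :
    Fq F lam ((Mmat F a b c d).mulVec v) = (a * d - b * c) ^ 2 * Fq F lam v := by
  simp only [Fq, Mmat, Matrix.mulVec, dotProduct, Fin.sum_univ_four,
    Matrix.cons_val_zero, Matrix.cons_val_one, Matrix.head_cons,
    Matrix.cons_val_two, Matrix.tail_cons, Matrix.cons_val_three,
    Matrix.of_apply, Matrix.cons_val']
  ring

lemma quadric_mem_iff {F : Type} [Field F] (lam : F) (σ : Equiv.Perm (Submodule F (Fin 4 → F)))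
    (hσ : σ ∈ Gcoll F) (P : Submodule F (Fin 4 → F)) :
    σ P ∈ quadric F lam ↔ P ∈ quadric F lam := by
  obtain ⟨a, b, c, d, hdet, e, he, hW⟩ := hσ
  rw [hW]
  constructor
  · rintro ⟨h1, h2⟩
    constructor
    · unfold isPoint at h1 ⊢; rw [← LinearEquiv.finrank_map_eq e P]; exact h1
    · intro v hv
      have := h2 (e v) (Submodule.mem_map_of_mem hv)
      rw [he, Fq_mulVec] at this
      have hne : (a * d - b * c) ^ 2 ≠ 0 := pow_ne_zero _ hdet
      exact (mul_eq_zero.mp this).resolve_left hne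
  · rintro ⟨h1, h2⟩
    constructor
    · unfold isPoint at h1 ⊢; rw [LinearEquiv.finrank_map_eq e P]; exact h1
    · rintro v ⟨u, hu, rfl⟩
      have := h2 u hu
      rw [LinearEquiv.coe_coe, he, Fq_mulVec, this, mul_zero]

lemma quadric_mem_iff_G {F : Type} [Field F] (lam : F)
    (g : Equiv.Perm (Submodule F (Fin 4 → F))) (hg : g ∈ G F)
    (P : Submodule F (Fin 4 → F)) : g P ∈ quadric F lam ↔ P ∈ quadric F lam := by
  induction hg using Subgroup.closure_induction generalizing P with
  | mem σ hσ => exact quadric_mem_iff lam σ hσ P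
  | one => simp
  | mul σ τ hσ hτ ihσ ihτ => rw [Equiv.Perm.mul_apply, ihσ, ihτ]
  | inv σ hσ ihσ =>
      have := ihσ (σ⁻¹ P)
      simp only [Equiv.Perm.coe_inv, Equiv.apply_symm_apply] at this
      exact this.symm

theorem statement_0 {F : Type} [Field F] [Fintype F] (q : ℕ)
    (hq : Fintype.card F = q) (hodd : Odd q) :
    (∀ a b c d : F, a * d - b * c ≠ 0 →
      ∀ (lam : F) (v : Fin 4 → F),
        Fq F lam ((Mmat F a b c d).mulVec v) = (a * d - b * c) ^ 2 * Fq F lam v) ∧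
    (∀ lam : F, ∀ g ∈ G F, (fun P => g • P) '' quadric F lam = quadric F lam) := by
  refine ⟨fun a b c d _ lam v => Fq_mulVec a b c d lam v, fun lam g hg => ?_⟩
  ext P
  simp only [Set.mem_image]
  constructor
  · rintro ⟨Q, hQ, rfl⟩
    exact (quadric_mem_iff_G lam g hg Q).mpr hQ
  · intro hP
    exact ⟨g⁻¹ P, by
      have := quadric_mem_iff_G lam g hg (g⁻¹ P)
      simp only [Equiv.Perm.coe_inv, Equiv.apply_symm_apply] at this
      exact this.mp hP, by simp⟩
end

section
/- The group G acts transitively on the set of points of Q₀ not in C ∪ {U₄}; this set has exactly q² − 1 points, and the stabilizer in G of any of its points has order q. -/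
section AuxMat
variable {F : Type} [Field F]

lemma Mmat_mul (a b c d a' b' c' d' : F) :
    Mmat F a b c d * Mmat F a' b' c' d' =
      Mmat F (a*a'+c*b') (b*a'+d*b') (a*c'+c*d') (b*c'+d*d') := by
  ext i j
  fin_cases i <;> fin_cases j <;>
    simp [Mmat, Matrix.mul_apply, Fin.sum_univ_four, Matrix.vecHead, Matrix.vecTail] <;> ring

lemma Mmat_one : Mmat F 1 0 0 1 = 1 := by
  ext i j
  fin_cases i <;> fin_cases j <;>
    simp [Mmat, Matrix.one_apply, Matrix.vecHead, Matrix.vecTail]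

lemma Mmat_scalar (k : F) : Mmat F k 0 0 k = (k^2) • 1 := by
  ext i j
  fin_cases i <;> fin_cases j <;>
    simp [Mmat, Matrix.one_apply, Matrix.smul_apply, Matrix.vecHead, Matrix.vecTail] <;> ring

lemma Mmat_mul_inv (a b c d : F) (h : a*d - b*c ≠ 0) :
    Mmat F a b c d * Mmat F (d/(a*d-b*c)) (-b/(a*d-b*c)) (-c/(a*d-b*c)) (a/(a*d-b*c)) = 1 := by
  rw [Mmat_mul]
  have e1 : a*(d/(a*d-b*c))+c*(-b/(a*d-b*c)) = 1 := by field_simp <;> try ring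
  have e2 : b*(d/(a*d-b*c))+d*(-b/(a*d-b*c)) = 0 := by field_simp <;> try ring
  have e3 : a*(-c/(a*d-b*c))+c*(a/(a*d-b*c)) = 0 := by field_simp <;> try ring
  have e4 : b*(-c/(a*d-b*c))+d*(a/(a*d-b*c)) = 1 := by field_simp <;> try ring
  rw [e1, e2, e3, e4, Mmat_one]

lemma Mmat_inv_mul (a b c d : F) (h : a*d - b*c ≠ 0) :
    Mmat F (d/(a*d-b*c)) (-b/(a*d-b*c)) (-c/(a*d-b*c)) (a/(a*d-b*c)) * Mmat F a b c d = 1 := by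
  rw [Mmat_mul]
  have e1 : d/(a*d-b*c)*a + -c/(a*d-b*c)*b = 1 := by
    rw [div_mul_eq_mul_div, div_mul_eq_mul_div, ← add_div, div_eq_one_iff_eq h]; ring
  have e2 : -b/(a*d-b*c)*a + a/(a*d-b*c)*b = 0 := by field_simp <;> try ring
  have e3 : d/(a*d-b*c)*c + -c/(a*d-b*c)*d = 0 := by field_simp <;> try ring
  have e4 : -b/(a*d-b*c)*c + a/(a*d-b*c)*d = 1 := by field_simp <;> try ring
  rw [e1, e2, e3, e4, Mmat_one]

/-- The linear equivalence induced by `Mmat a b c d`. -/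
noncomputable def MtoE (a b c d : F) (h : a*d - b*c ≠ 0) :
    (Fin 4 → F) ≃ₗ[F] (Fin 4 → F) :=
  Matrix.toLin'OfInv (Mmat_inv_mul a b c d h) (Mmat_mul_inv a b c d h)

lemma MtoE_apply (a b c d : F) (h : a*d - b*c ≠ 0) (v : Fin 4 → F) :
    MtoE a b c d h v = (Mmat F a b c d).mulVec v :=
  Matrix.toLin'_apply _ v

end AuxMat
section AuxPerm
variable {F : Type} [Field F]

/-- The collineation induced by `Mmat a b c d`. -/
noncomputable def MtoPerm (a b c d : F) (h : a*d - b*c ≠ 0) :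
    Equiv.Perm (Submodule F (Fin 4 → F)) :=
  (Submodule.orderIsoMapComap (MtoE a b c d h)).toEquiv

lemma MtoPerm_apply (a b c d : F) (h : a*d - b*c ≠ 0) (W : Submodule F (Fin 4 → F)) :
    MtoPerm a b c d h W = W.map (MtoE a b c d h).toLinearMap := rfl

lemma MtoPerm_mem_Gcoll (a b c d : F) (h : a*d - b*c ≠ 0) :
    MtoPerm a b c d h ∈ Gcoll F :=
  ⟨a, b, c, d, h, MtoE a b c d h, MtoE_apply a b c d h, MtoPerm_apply a b c d h⟩

lemma map_congr_of_eqOn {e e' : (Fin 4 → F) ≃ₗ[F] (Fin 4 → F)}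
    (hee : ∀ v, e v = e' v) (W : Submodule F (Fin 4 → F)) :
    W.map e.toLinearMap = W.map e'.toLinearMap := by
  ext x
  simp only [Submodule.mem_map, LinearEquiv.coe_coe]
  constructor <;> rintro ⟨y, hy, rfl⟩ <;> exact ⟨y, hy, by rw [hee y]⟩

lemma perm_eq_of_matrix {σ : Equiv.Perm (Submodule F (Fin 4 → F))}
    {e : (Fin 4 → F) ≃ₗ[F] (Fin 4 → F)} (a b c d : F) (h : a*d - b*c ≠ 0)
    (he : ∀ v, e v = (Mmat F a b c d).mulVec v)
    (hσ : ∀ W : Submodule F (Fin 4 → F), σ W = W.map e.toLinearMap) :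
    σ = MtoPerm a b c d h := by
  apply Equiv.ext
  intro W
  rw [hσ W, MtoPerm_apply]
  exact map_congr_of_eqOn (fun v => by rw [he v, MtoE_apply]) W

/-- `Gcoll` is a subgroup. -/
noncomputable def Gsub (F : Type) [Field F] :
    Subgroup (Equiv.Perm (Submodule F (Fin 4 → F))) where
  carrier := Gcoll F
  one_mem' := by
    refine ⟨1, 0, 0, 1, by norm_num, LinearEquiv.refl F _, fun v => ?_, fun W => ?_⟩
    · rw [Mmat_one, Matrix.one_mulVec]; rfl
    · simp only [Equiv.Perm.coe_one, id_eq]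
      exact (Submodule.map_id W).symm
  mul_mem' := by
    rintro σ τ ⟨a, b, c, d, h, e, he, hσ⟩ ⟨a', b', c', d', h', e', he', hτ⟩
    refine ⟨a*a'+c*b', b*a'+d*b', a*c'+c*d', b*c'+d*d', ?_, e'.trans e, fun v => ?_, fun W => ?_⟩
    · have : (a*a'+c*b')*(b*c'+d*d') - (b*a'+d*b')*(a*c'+c*d')
          = (a*d-b*c)*(a'*d'-b'*c') := by ring
      rw [this]
      exact mul_ne_zero h h'
    · have : (e'.trans e) v = e (e' v) := rfl
      rw [this, he', he, Matrix.mulVec_mulVec, Mmat_mul]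
    · have h1 : (σ * τ) W = σ (τ W) := rfl
      rw [h1, hτ, hσ, ← Submodule.map_comp]
      rfl
  inv_mem' := by
    rintro σ ⟨a, b, c, d, h, e, he, hσ⟩
    set δ := a*d - b*c with hδ
    refine ⟨d/δ, -b/δ, -c/δ, a/δ, ?_, e.symm, fun v => ?_, fun W => ?_⟩
    · have h2 : d/δ*(a/δ) - (-b/δ)*(-c/δ) = δ⁻¹ := by
        field_simp
        ring_nf
        linear_combination -hδ
      rw [h2]
      exact inv_ne_zero h
    · apply e.injective
      rw [LinearEquiv.apply_symm_apply, he, Matrix.mulVec_mulVec, Mmat_mul_inv a b c d h]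
      rw [Matrix.one_mulVec]
    · have key : σ (W.map e.symm.toLinearMap) = W := by
        rw [hσ, ← Submodule.map_comp]
        ext x
        simp only [Submodule.mem_map, LinearMap.coe_comp, LinearEquiv.coe_coe,
          Function.comp_apply, LinearEquiv.apply_symm_apply]
        constructor
        · rintro ⟨y, hy, rfl⟩
          exact hy
        · intro hx
          exact ⟨x, hx, rfl⟩
      calc σ⁻¹ W = σ⁻¹ (σ (W.map e.symm.toLinearMap)) := by rw [key]
        _ = W.map e.symm.toLinearMap := by simp

lemma G_eq : G F = Gsub F := by
  have : Gcoll F = ↑(Gsub F) := rfl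
  rw [G, this, Subgroup.closure_eq]

lemma mem_G_iff {σ : Equiv.Perm (Submodule F (Fin 4 → F))} :
    σ ∈ G F ↔ σ ∈ Gcoll F := by
  rw [G_eq]; rfl

end AuxPerm
section AuxGeo
variable {F : Type} [Field F]

lemma mem_planePi {v : Fin 4 → F} : v ∈ planePi F ↔ v 3 = 0 := Iff.rfl

lemma vec_ne_zero (x1 x2 x3 : F) : ![x1,x2,x3,(1:F)] ≠ 0 := by
  intro h
  have := congrFun h 3
  simp at this

lemma Fq_smul (lam k : F) (v : Fin 4 → F) : Fq F lam (k • v) = k^2 * Fq F lam v := by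
  simp only [Fq, Pi.smul_apply, smul_eq_mul]
  ring

lemma single_eq_vec : (Pi.single 3 1 : Fin 4 → F) = ![0,0,0,1] := by
  funext i
  fin_cases i <;> simp [Pi.single, Function.update]

lemma point_is_span {P : Submodule F (Fin 4 → F)} (h : isPoint F P) :
    ∃ w : Fin 4 → F, w ≠ 0 ∧ P = Submodule.span F {w} := by
  have hbot : P ≠ ⊥ := by
    intro hb
    rw [isPoint, hb] at h
    simp [finrank_bot] at h
  obtain ⟨w, hwP, hw0⟩ := Submodule.exists_mem_ne_zero_of_ne_bot hbot
  refine ⟨w, hw0, ?_⟩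
  symm
  apply Submodule.eq_of_le_of_finrank_eq
  · rwa [Submodule.span_singleton_le_iff_mem]
  · rw [finrank_span_singleton hw0, h]

lemma mem_X_iff (P : Submodule F (Fin 4 → F)) :
    P ∈ quadric F 0 \ (conicC F ∪ {pointU4 F}) ↔
    ∃ x1 x2 x3 : F, x1*x3 = x2^2 ∧ ¬(x1 = 0 ∧ x2 = 0 ∧ x3 = 0) ∧
      P = Submodule.span F {![x1,x2,x3,1]} := by
  constructor
  · rintro ⟨⟨hpt, hvan⟩, hnot⟩
    obtain ⟨w, hw0, rfl⟩ := point_is_span hpt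
    have hw3 : w 3 ≠ 0 := by
      intro h3
      apply hnot
      left
      refine ⟨⟨hpt, hvan⟩, ?_⟩
      rw [Submodule.span_singleton_le_iff_mem, mem_planePi]
      exact h3
    have hq : w 0 * w 2 - w 1 ^ 2 = 0 := by
      have := hvan w (Submodule.mem_span_singleton_self w)
      simpa [Fq] using this
    refine ⟨(w 3)⁻¹ * w 0, (w 3)⁻¹ * w 1, (w 3)⁻¹ * w 2, ?_, ?_, ?_⟩
    · linear_combination ((w 3)⁻¹)^2 * hq
    · rintro ⟨h1, h2, h3⟩
      apply hnot
      right
      have hinv : (w 3)⁻¹ ≠ 0 := inv_ne_zero hw3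
      have hw0' : w 0 = 0 := by rcases mul_eq_zero.mp h1 with h | h; exact absurd h hinv; exact h
      have hw1' : w 1 = 0 := by rcases mul_eq_zero.mp h2 with h | h; exact absurd h hinv; exact h
      have hw2' : w 2 = 0 := by rcases mul_eq_zero.mp h3 with h | h; exact absurd h hinv; exact h
      have hw : w = w 3 • ![0,0,0,1] := by
        funext i
        fin_cases i <;> simp [hw0', hw1', hw2']
      show Submodule.span F {w} = pointU4 F
      rw [pointU4, single_eq_vec, hw]
      exact Submodule.span_singleton_smul_eq (IsUnit.mk0 _ hw3) _
    · have heq : ![(w 3)⁻¹ * w 0, (w 3)⁻¹ * w 1, (w 3)⁻¹ * w 2, (1:F)] = (w 3)⁻¹ • w := by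
        funext i
        fin_cases i <;> simp [inv_mul_cancel₀ hw3]
      rw [heq, Submodule.span_singleton_smul_eq (IsUnit.mk0 _ (inv_ne_zero hw3)) _]
  · rintro ⟨x1, x2, x3, hx, hnz, rfl⟩
    have hpt : isPoint F (Submodule.span F {![x1,x2,x3,(1:F)]}) :=
      finrank_span_singleton (vec_ne_zero x1 x2 x3)
    refine ⟨⟨hpt, fun v hv => ?_⟩, ?_⟩
    · rw [Submodule.mem_span_singleton] at hv
      obtain ⟨c, rfl⟩ := hv
      rw [Fq_smul]
      have : Fq F 0 ![x1,x2,x3,1] = 0 := by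
        simp [Fq]
        linear_combination hx
      rw [this, mul_zero]
    · rintro (⟨-, hle⟩ | hU4)
      · have := hle (Submodule.mem_span_singleton_self _)
        rw [mem_planePi] at this
        simp at this
      · have hU : Submodule.span F {![x1,x2,x3,(1:F)]} = pointU4 F := hU4
        rw [pointU4, single_eq_vec] at hU
        have hmem : ![x1,x2,x3,(1:F)] ∈ Submodule.span F {![(0:F),0,0,1]} := by
          rw [← hU]
          exact Submodule.mem_span_singleton_self _
        rw [Submodule.mem_span_singleton] at hmem
        obtain ⟨c, hc⟩ := hmem
        apply hnz
        refine ⟨?_, ?_, ?_⟩ <;> [have := congrFun hc 0; have := congrFun hc 1;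
          have := congrFun hc 2] <;> simpa using this.symm
end AuxGeo
section AuxTrans
variable {F : Type} [Field F]

lemma MtoPerm_smul_span (a b c d : F) (h : a*d - b*c ≠ 0) (w : Fin 4 → F) :
    MtoPerm a b c d h • Submodule.span F {w}
      = Submodule.span F {(Mmat F a b c d).mulVec w} := by
  show MtoPerm a b c d h (Submodule.span F {w}) = _
  rw [MtoPerm_apply, Submodule.map_span, Set.image_singleton, LinearEquiv.coe_coe, MtoE_apply]

lemma exists_g_to_P0 (x1 x2 x3 : F) (hx : x1*x3 = x2^2) (hnz : ¬(x1 = 0 ∧ x2 = 0 ∧ x3 = 0)) :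
    ∃ (a b c d : F) (h : a*d - b*c ≠ 0),
      MtoPerm a b c d h • Submodule.span F {![x1,x2,x3,1]}
        = Submodule.span F {![(1:F),0,0,1]} := by
  by_cases h1 : x1 = 0
  · have hx2 : x2 = 0 := by
      have : x2^2 = 0 := by rw [← hx, h1, zero_mul]
      exact pow_eq_zero_iff (by norm_num) |>.mp this
    have hx3 : x3 ≠ 0 := fun h3 => hnz ⟨h1, hx2, h3⟩
    have hdet : (0:F)*0 - (-x3)*1 ≠ 0 := by simpa using hx3
    refine ⟨0, -x3, 1, 0, hdet, ?_⟩
    rw [MtoPerm_smul_span]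
    have hvec : (Mmat F 0 (-x3) 1 0).mulVec ![x1,x2,x3,1] = x3 • ![1,0,0,1] := by
      funext i
      fin_cases i <;>
        simp [Mmat, Matrix.mulVec, dotProduct, Fin.sum_univ_four,
          Matrix.vecHead, Matrix.vecTail, h1, hx2] <;> try ring
    rw [hvec, Submodule.span_singleton_smul_eq (IsUnit.mk0 _ hx3)]
  · have hdet : (1:F)*x1 - (-x2)*0 ≠ 0 := by simpa using h1
    refine ⟨1, -x2, 0, x1, hdet, ?_⟩
    rw [MtoPerm_smul_span]
    have hvec : (Mmat F 1 (-x2) 0 x1).mulVec ![x1,x2,x3,1] = x1 • ![1,0,0,1] := by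
      funext i
      fin_cases i <;>
        simp [Mmat, Matrix.mulVec, dotProduct, Fin.sum_univ_four,
          Matrix.vecHead, Matrix.vecTail] <;> try ring
      linear_combination x1 * hx
    rw [hvec, Submodule.span_singleton_smul_eq (IsUnit.mk0 _ h1)]

lemma transitive_X (P P' : Submodule F (Fin 4 → F))
    (hP : P ∈ quadric F 0 \ (conicC F ∪ {pointU4 F}))
    (hP' : P' ∈ quadric F 0 \ (conicC F ∪ {pointU4 F})) :
    ∃ g ∈ G F, g • P = P' := by
  rw [mem_X_iff] at hP hP'
  obtain ⟨x1, x2, x3, hx, hnz, rfl⟩ := hP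
  obtain ⟨y1, y2, y3, hy, hnz', rfl⟩ := hP'
  obtain ⟨a, b, c, d, h, hg⟩ := exists_g_to_P0 x1 x2 x3 hx hnz
  obtain ⟨a', b', c', d', h', hg'⟩ := exists_g_to_P0 y1 y2 y3 hy hnz'
  refine ⟨(MtoPerm a' b' c' d' h')⁻¹ * MtoPerm a b c d h, ?_, ?_⟩
  · exact mul_mem (inv_mem (mem_G_iff.mpr (MtoPerm_mem_Gcoll a' b' c' d' h')))
      (mem_G_iff.mpr (MtoPerm_mem_Gcoll a b c d h))
  · rw [mul_smul, hg, ← hg', inv_smul_smul]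

end AuxTrans
section AuxCount
variable {F : Type} [Field F]

lemma span_vec_inj {a1 a2 a3 b1 b2 b3 : F}
    (h : Submodule.span F {![a1,a2,a3,(1:F)]} = Submodule.span F {![b1,b2,b3,(1:F)]}) :
    a1 = b1 ∧ a2 = b2 ∧ a3 = b3 := by
  rw [Submodule.span_singleton_eq_span_singleton] at h
  obtain ⟨z, hz⟩ := h
  have h3 := congrFun hz 3
  simp [Units.smul_def] at h3
  have h0 := congrFun hz 0
  have h1 := congrFun hz 1
  have h2 := congrFun hz 2
  simp only [Pi.smul_apply, Units.smul_def, smul_eq_mul, Matrix.cons_val_zero,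
    Matrix.cons_val_one, Matrix.head_cons] at h0 h1 h2
  refine ⟨?_, ?_, ?_⟩
  · simpa [h3] using h0
  · simpa [h3] using h1
  · have : (z:F) * a3 = b3 := by simpa using h2
    simpa [h3] using this

/-- Parametrization of the points of the cone off `C ∪ {U₄}`. -/
noncomputable def psiX (p : Fˣ × Option F) : Submodule F (Fin 4 → F) :=
  match p.2 with
  | some t => Submodule.span F {![(p.1:F)*t^2, (p.1:F)*t, (p.1:F), 1]}
  | none => Submodule.span F {![(p.1:F), 0, 0, 1]}

lemma psiX_injective : Function.Injective (psiX (F := F)) := by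
  rintro ⟨c, o⟩ ⟨c', o'⟩ h
  cases o with
  | some t =>
    cases o' with
    | some t' =>
      simp only [psiX] at h
      obtain ⟨e1, e2, e3⟩ := span_vec_inj h
      have hc : (c:F) = c' := e3
      have ht : t = t' := by
        have := e2
        rw [hc] at this
        exact mul_left_cancel₀ c'.ne_zero this
      simp [Prod.ext_iff, Units.ext_iff, hc, ht]
    | none =>
      simp only [psiX] at h
      obtain ⟨e1, e2, e3⟩ := span_vec_inj h
      exact absurd e3 c.ne_zero
  | none =>
    cases o' with
    | some t' =>
      simp only [psiX] at h
      obtain ⟨e1, e2, e3⟩ := span_vec_inj h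
      exact absurd e3.symm c'.ne_zero
    | none =>
      simp only [psiX] at h
      obtain ⟨e1, e2, e3⟩ := span_vec_inj h
      simp [Prod.ext_iff, Units.ext_iff, e1]

lemma range_psiX :
    Set.range (psiX (F := F)) = quadric F 0 \ (conicC F ∪ {pointU4 F}) := by
  ext P
  constructor
  · rintro ⟨⟨c, o⟩, rfl⟩
    rw [mem_X_iff]
    cases o with
    | some t =>
      exact ⟨(c:F)*t^2, (c:F)*t, (c:F), by ring, fun ⟨_, _, h3⟩ => c.ne_zero h3, rfl⟩
    | none =>
      exact ⟨(c:F), 0, 0, by ring, fun ⟨h1, _, _⟩ => c.ne_zero h1, rfl⟩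
  · intro hP
    rw [mem_X_iff] at hP
    obtain ⟨x1, x2, x3, hx, hnz, rfl⟩ := hP
    by_cases h3 : x3 = 0
    · have h2 : x2 = 0 := by
        have : x2^2 = 0 := by rw [← hx, h3, mul_zero]
        exact pow_eq_zero_iff (by norm_num) |>.mp this
      have h1 : x1 ≠ 0 := fun h1 => hnz ⟨h1, h2, h3⟩
      refine ⟨(Units.mk0 x1 h1, none), ?_⟩
      simp only [psiX, Units.val_mk0]
      rw [h2, h3]
    · refine ⟨(Units.mk0 x3 h3, some (x2/x3)), ?_⟩
      simp only [psiX, Units.val_mk0]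
      congr 2
      have e1 : x3 * (x2/x3)^2 = x1 := by
        field_simp
        linear_combination -hx
      have e2 : x3 * (x2/x3) = x2 := by field_simp
      rw [e1, e2]

lemma ncard_X [Fintype F] :
    (quadric F 0 \ (conicC F ∪ {pointU4 F})).ncard = Fintype.card F ^ 2 - 1 := by
  classical
  rw [← range_psiX]
  rw [← Nat.card_coe_set_eq]
  rw [Nat.card_congr (Equiv.ofInjective _ (psiX_injective (F := F))).symm]
  rw [Nat.card_eq_fintype_card, Fintype.card_prod, Fintype.card_units, Fintype.card_option]
  have hpos : 1 ≤ Fintype.card F := Fintype.card_pos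
  obtain ⟨k, hk⟩ : ∃ k, Fintype.card F = k + 1 := ⟨Fintype.card F - 1, by omega⟩
  rw [hk]
  have : (k+1)^2 = k * (k+1+1) + 1 := by ring
  rw [this]
  simp

end AuxCount
section AuxStab
variable {F : Type} [Field F]

/-- The base point `⟨(1,0,0,1)⟩`. -/
noncomputable def P0 (F : Type) [Field F] : Submodule F (Fin 4 → F) :=
  Submodule.span F {![1,0,0,1]}

lemma detT (t : F) : (1:F)*1 - 0*t ≠ 0 := by norm_num

lemma Mmat_scale (a c : F) (ha : a ≠ 0) :
    Mmat F a 0 c a = a^2 • Mmat F 1 0 (c/a) 1 := by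
  ext i j
  fin_cases i <;> fin_cases j <;>
    (try simp [Mmat, Matrix.smul_apply, Matrix.vecHead, Matrix.vecTail]) <;>
    (try field_simp) <;> (try ring)

lemma map_eq_of_smul {e e' : (Fin 4 → F) ≃ₗ[F] (Fin 4 → F)} {k : F} (hk : k ≠ 0)
    (hee : ∀ v, e v = k • e' v) (W : Submodule F (Fin 4 → F)) :
    W.map e.toLinearMap = W.map e'.toLinearMap := by
  ext x
  simp only [Submodule.mem_map, LinearEquiv.coe_coe]
  constructor
  · rintro ⟨y, hy, rfl⟩
    exact ⟨k • y, W.smul_mem k hy, by rw [map_smul, ← hee]⟩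
  · rintro ⟨y, hy, rfl⟩
    refine ⟨k⁻¹ • y, W.smul_mem _ hy, ?_⟩
    rw [map_smul, hee, smul_smul, inv_mul_cancel₀ hk, one_smul]

lemma mulVec_T (t : F) :
    (Mmat F 1 0 t 1).mulVec ![1,0,0,1] = ![1,0,0,1] := by
  funext i
  fin_cases i <;>
    simp [Mmat, Matrix.mulVec, dotProduct, Fin.sum_univ_four,
      Matrix.vecHead, Matrix.vecTail]

lemma mulVec_T' (t : F) :
    (Mmat F 1 0 t 1).mulVec ![0,0,1,0] = ![t^2, t, 1, 0] := by
  funext i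
  fin_cases i <;>
    simp [Mmat, Matrix.mulVec, dotProduct, Fin.sum_univ_four,
      Matrix.vecHead, Matrix.vecTail]

lemma MtoPerm_T_fix (t : F) : MtoPerm 1 0 t 1 (detT t) • P0 F = P0 F := by
  rw [P0, MtoPerm_smul_span, mulVec_T]

/-- The subgroup element corresponding to `M(1,0,t,1)`. -/
noncomputable def gT (t : F) : (G F) :=
  ⟨MtoPerm 1 0 t 1 (detT t), mem_G_iff.mpr (MtoPerm_mem_Gcoll 1 0 t 1 (detT t))⟩

noncomputable def stabMap (t : F) : MulAction.stabilizer (G F) (P0 F) :=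
  ⟨gT t, by
    show (gT t : Equiv.Perm (Submodule F (Fin 4 → F))) • P0 F = P0 F
    exact MtoPerm_T_fix t⟩

lemma stabMap_injective : Function.Injective (stabMap (F := F)) := by
  intro t t' h
  have h0 : gT t = gT t' := Subtype.ext_iff.mp h
  have hperm : MtoPerm 1 0 t 1 (detT t) = MtoPerm 1 0 t' 1 (detT t') :=
    Subtype.ext_iff.mp h0
  have hspan : Submodule.span F {![t^2, t, 1, 0]}
      = Submodule.span F {![t'^2, t', 1, 0]} := by
    rw [← mulVec_T' t, ← mulVec_T' t', ← MtoPerm_smul_span 1 0 t 1 (detT t),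
      ← MtoPerm_smul_span 1 0 t' 1 (detT t'), hperm]
  rw [Submodule.span_singleton_eq_span_singleton] at hspan
  obtain ⟨z, hz⟩ := hspan
  have hz2 := congrFun hz 2
  simp [Units.smul_def] at hz2
  have hz1 := congrFun hz 1
  simp only [Pi.smul_apply, Units.smul_def, smul_eq_mul, Matrix.cons_val_one,
    Matrix.head_cons] at hz1
  rw [hz2] at hz1
  simpa using hz1

lemma sigma_eq_MtoPerm {σ : Equiv.Perm (Submodule F (Fin 4 → F))}
    {e : (Fin 4 → F) ≃ₗ[F] (Fin 4 → F)} {a c : F} (ha : a ≠ 0)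
    (he : ∀ v, e v = (Mmat F a 0 c a).mulVec v)
    (hW : ∀ W : Submodule F (Fin 4 → F), σ W = W.map e.toLinearMap) :
    σ = MtoPerm 1 0 (c/a) 1 (detT (c/a)) := by
  apply Equiv.ext
  intro W
  rw [hW W, MtoPerm_apply]
  apply map_eq_of_smul (k := a^2) (pow_ne_zero 2 ha)
  intro v
  rw [he, MtoE_apply, Mmat_scale a c ha, Matrix.smul_mulVec]

lemma stabMap_surjective : Function.Surjective (stabMap (F := F)) := by
  rintro ⟨⟨σ, hσG⟩, hfix⟩
  obtain ⟨a, b, c, d, h, e, he, hW⟩ := mem_G_iff.mp hσG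
  have hfix' : σ (P0 F) = P0 F := hfix
  have hP0 : σ (P0 F) = Submodule.span F {![a^2, a*b, b^2, a*d - b*c]} := by
    rw [hW, P0, Submodule.map_span, Set.image_singleton, LinearEquiv.coe_coe, he]
    have : (Mmat F a b c d).mulVec ![1,0,0,1] = ![a^2, a*b, b^2, a*d - b*c] := by
      funext i
      fin_cases i <;>
        simp [Mmat, Matrix.mulVec, dotProduct, Fin.sum_univ_four,
          Matrix.vecHead, Matrix.vecTail]
    rw [this]
  rw [hfix'] at hP0
  rw [P0, eq_comm, Submodule.span_singleton_eq_span_singleton] at hP0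
  obtain ⟨z, hz⟩ := hP0
  have c0 := congrFun hz 0
  have c1 := congrFun hz 1
  have c3 := congrFun hz 3
  simp only [Pi.smul_apply, Units.smul_def, smul_eq_mul, Matrix.cons_val_zero,
    Matrix.cons_val_one, Matrix.head_cons] at c0 c1 c3
  have ha : a ≠ 0 := by
    intro ha0
    rw [ha0] at c0
    simp at c0
  have hb : b = 0 := by
    have h' : (z:F) * (a*b) = 0 := by simpa using c1
    rcases mul_eq_zero.mp h' with h'' | h''
    · exact absurd h'' z.ne_zero
    · rcases mul_eq_zero.mp h'' with h3 | h3
      · exact absurd h3 ha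
      · exact h3
  have hd : d = a := by
    have h1 : (z:F) * (a*d) = (z:F) * (a*a) := by
      have c0' : (z:F) * a^2 = 1 := by simpa using c0
      have c3' : (z:F) * (a*d - b*c) = 1 := by simpa using c3
      linear_combination c3' - c0' + (z:F)*c*hb
    have h2 : a * d = a * a := mul_left_cancel₀ z.ne_zero h1
    exact (mul_left_cancel₀ ha h2)
  have he' : ∀ v, e v = (Mmat F a 0 c a).mulVec v := by
    intro v
    rw [he v, hb, hd]
  refine ⟨c/a, ?_⟩
  apply Subtype.ext
  apply Subtype.ext
  show MtoPerm 1 0 (c/a) 1 (detT (c/a)) = σ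
  exact (sigma_eq_MtoPerm ha he' hW).symm

lemma card_stab_P0 [Fintype F] :
    Nat.card (MulAction.stabilizer (G F) (P0 F)) = Fintype.card F := by
  rw [Nat.card_congr (Equiv.ofBijective stabMap
    ⟨stabMap_injective, stabMap_surjective⟩).symm]
  exact Nat.card_eq_fintype_card

lemma P0_mem_X : P0 F ∈ quadric F 0 \ (conicC F ∪ {pointU4 F}) := by
  rw [mem_X_iff]
  exact ⟨1, 0, 0, by ring, by simp, rfl⟩

lemma card_stab [Fintype F] (P : Submodule F (Fin 4 → F))
    (hP : P ∈ quadric F 0 \ (conicC F ∪ {pointU4 F})) :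
    Nat.card (MulAction.stabilizer (G F) P) = Fintype.card F := by
  obtain ⟨σ, hσG, hσ⟩ := transitive_X (P0 F) P P0_mem_X hP
  have key : (⟨σ, hσG⟩ : G F) • P0 F = P := hσ
  rw [← key, MulAction.stabilizer_smul_eq_stabilizer_map_conj]
  have hcard := Nat.card_congr (Subgroup.equivMapOfInjective
    (MulAction.stabilizer (G F) (P0 F))
    (MulAut.conj (⟨σ, hσG⟩ : G F)).toMonoidHom
    (MulAut.conj (⟨σ, hσG⟩ : G F)).injective).toEquiv
  rw [← hcard]
  exact card_stab_P0

end AuxStab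

theorem statement_1 {F : Type} [Field F] [Fintype F] (q : ℕ)
    (hq : Fintype.card F = q) (hodd : Odd q) :
    (∀ P ∈ quadric F 0 \ (conicC F ∪ {pointU4 F}),
      ∀ P' ∈ quadric F 0 \ (conicC F ∪ {pointU4 F}), ∃ g ∈ G F, g • P = P') ∧
    (quadric F 0 \ (conicC F ∪ {pointU4 F})).ncard = q ^ 2 - 1 ∧
    (∀ P ∈ quadric F 0 \ (conicC F ∪ {pointU4 F}),
      Nat.card (MulAction.stabilizer (G F) P) = q) := by
  refine ⟨fun P hP P' hP' => transitive_X P P' hP hP', ?_, fun P hP => ?_⟩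
  · rw [← hq]
    exact ncard_X
  · rw [← hq]
    exact card_stab P hP
end

section
/- Every line of L₄ is secant to the hyperbolic quadric Q_λ for every nonzero square λ ∈ GF(q) and external to the elliptic quadric Q_λ for every nonsquare λ ∈ GF(q). -/
namespace S9aux

variable {F : Type} [Field F]

lemma mem_planePi (v : Fin 4 → F) : v ∈ planePi F ↔ v 3 = 0 := Iff.rfl

lemma fq_smul (lam a : F) (v : Fin 4 → F) : Fq F lam (a • v) = a ^ 2 * Fq F lam v := by
  simp only [Fq, Pi.smul_apply, smul_eq_mul]; ring

lemma fq_add_smul (lam t : F) (c u : Fin 4 → F) (hu3 : u 3 = 0) :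
    Fq F lam (c + t • u) =
      Fq F lam c + t * (c 0 * u 2 + c 2 * u 0 - 2 * (c 1 * u 1)) + t ^ 2 * Fq F 0 u := by
  simp only [Fq, Pi.add_apply, Pi.smul_apply, smul_eq_mul, hu3]; ring

lemma fq_lam_of_pi (lam : F) (u : Fin 4 → F) (hu3 : u 3 = 0) : Fq F lam u = Fq F 0 u := by
  simp [Fq, hu3]

lemma point_gen (P : Submodule F (Fin 4 → F)) (h : isPoint F P) :
    ∃ v, v ≠ 0 ∧ P = Submodule.span F {v} := by
  have hp : P.IsPrincipal := (Submodule.finrank_le_one_iff_isPrincipal P).mp (by rw [h])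
  obtain ⟨v, hv⟩ := hp.principal
  refine ⟨v, ?_, hv⟩
  rintro rfl
  rw [isPoint, hv, Submodule.span_zero_singleton] at h
  simp at h

lemma span_mem_quadric_iff (lam : F) (v : Fin 4 → F) (hv : v ≠ 0) :
    (∀ x ∈ Submodule.span F {v}, Fq F lam x = 0) ↔ Fq F lam v = 0 := by
  constructor
  · intro h; exact h v (Submodule.mem_span_singleton_self v)
  · intro h x hx
    obtain ⟨a, rfl⟩ := Submodule.mem_span_singleton.mp hx
    rw [fq_smul, h, mul_zero]

lemma point_span (v : Fin 4 → F) (hv : v ≠ 0) : isPoint F (Submodule.span F {v}) :=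
  finrank_span_singleton hv

/-- spans of `w + t•u` determine `t`, when `u 3 = 0 ≠ w 3`. -/
lemma span_param_inj {u w : Fin 4 → F} (hu0 : u ≠ 0) (hu3 : u 3 = 0) (hw3 : w 3 ≠ 0)
    {t₁ t₂ : F}
    (h : Submodule.span F {w + t₁ • u} = Submodule.span F {w + t₂ • u}) : t₁ = t₂ := by
  rw [Submodule.span_singleton_eq_span_singleton] at h
  obtain ⟨z, hz⟩ := h
  have h3 : (z : F) * w 3 = w 3 := by
    have := congrFun hz 3
    simpa [Units.smul_def, hu3] using this
  have hz1 : (z : F) = 1 := by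
    have h3' : (z : F) * w 3 = 1 * w 3 := by rw [h3, one_mul]
    exact mul_right_cancel₀ hw3 h3' 
  have hz' : w + t₁ • u = w + t₂ • u := by
    have := hz
    rw [Units.smul_def, hz1, one_smul] at this
    exact this
  have ht : t₁ • u = t₂ • u := by
    have := add_left_cancel hz'
    exact this
  exact smul_left_injective F hu0 ht

lemma line_eq_span_pair (l : Submodule F (Fin 4 → F)) (hl : isLine F l)
    {u w : Fin 4 → F} (hul : u ∈ l) (hwl : w ∈ l) (hu0 : u ≠ 0)
    (hind : ∀ a : F, a • u ≠ w) :
    l = Submodule.span F {u, w} := by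
  have hle : Submodule.span F ({u, w} : Set (Fin 4 → F)) ≤ l := by
    rw [Submodule.span_le]; rintro x (rfl | rfl) <;> assumption
  have hli : LinearIndependent F ![u, w] := (LinearIndependent.pair_iff' hu0).mpr hind
  have h2 := finrank_span_eq_card hli
  rw [Matrix.range_cons_cons_empty] at h2
  symm
  apply Submodule.eq_of_le_of_finrank_eq hle
  rw [hl]; simpa using h2

/-- Characterization of the quadric points on a line spanned by `u` (in `π`)
and `w` (off `π`), when `u` is not on the quadric. -/
lemma qpts_eq (lam : F) (l : Submodule F (Fin 4 → F)) (hl : isLine F l)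
    (u w : Fin 4 → F) (hul : u ∈ l) (hwl : w ∈ l) (hu0 : u ≠ 0) (hu3 : u 3 = 0)
    (hw3 : w 3 ≠ 0) (huf : Fq F lam u ≠ 0) :
    qpts F lam l =
      {P | ∃ t : F, Fq F lam (w + t • u) = 0 ∧ P = Submodule.span F {w + t • u}} := by
  have hind : ∀ a : F, a • u ≠ w := by
    intro a ha
    apply hw3
    rw [← ha]; simp [hu3]
  have hspan := line_eq_span_pair l hl hul hwl hu0 hind
  ext P
  constructor
  · rintro ⟨⟨hPpt, hPF⟩, hPle⟩
    obtain ⟨v, hv0, rfl⟩ := point_gen P hPpt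
    have hvl : v ∈ l := hPle (Submodule.mem_span_singleton_self v)
    rw [hspan] at hvl
    obtain ⟨a, b, hab⟩ := Submodule.mem_span_pair.mp hvl
    have hFv : Fq F lam v = 0 := hPF v (Submodule.mem_span_singleton_self v)
    have hb : b ≠ 0 := by
      rintro rfl
      rw [zero_smul, add_zero] at hab
      have ha0 : a ≠ 0 := by rintro rfl; rw [zero_smul] at hab; exact hv0 hab.symm
      rw [← hab, fq_smul] at hFv
      rcases mul_eq_zero.mp hFv with h | h
      · exact ha0 (pow_eq_zero_iff (n := 2) (by norm_num) |>.mp h)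
      · exact huf h
    refine ⟨a / b, ?_, ?_⟩
    · have : w + (a / b) • u = b⁻¹ • v := by
        rw [← hab]; rw [smul_add, smul_smul, smul_smul]
        field_simp
        rw [add_comm, one_smul]
      rw [this, fq_smul, hFv, mul_zero]
    · have : w + (a / b) • u = b⁻¹ • v := by
        rw [← hab]; rw [smul_add, smul_smul, smul_smul]
        field_simp
        rw [add_comm, one_smul]
      rw [this]
      exact (Submodule.span_singleton_smul_eq (IsUnit.mk0 _ (inv_ne_zero hb)) v).symm ▸
        (Submodule.span_singleton_smul_eq (IsUnit.mk0 _ (inv_ne_zero hb)) v)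
  · rintro ⟨t, hFt, rfl⟩
    have hvz : w + t • u ≠ 0 := by
      intro h
      apply hw3
      have := congrFun h 3
      simpa [hu3] using this
    refine ⟨⟨point_span _ hvz, (span_mem_quadric_iff lam _ hvz).mpr hFt⟩, ?_⟩
    rw [Submodule.span_le, Set.singleton_subset_iff]
    exact l.add_mem hwl (l.smul_mem t hul)

end S9aux

namespace S9aux

lemma two_ne_zero_of_odd_card {F : Type} [Field F] [Fintype F]
    (hodd : Odd (Fintype.card F)) : (2 : F) ≠ 0 := by
  intro h2
  have hc : ((2 : ℕ) : F) = 0 := by exact_mod_cast h2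
  have hchar : ringChar F ∣ 2 := (CharP.cast_eq_zero_iff F (ringChar F) 2).mp hc
  have hprime : (ringChar F).Prime := CharP.char_is_prime F (ringChar F)
  have h2' : ringChar F = 2 := (Nat.prime_dvd_prime_iff_eq hprime Nat.prime_two).mp hchar
  haveI : CharP F 2 := h2' ▸ ringChar.charP F
  obtain ⟨n, -, hn⟩ := FiniteField.card F 2
  have heven : Even (Fintype.card F) := by
    rw [hn]
    exact Nat.even_pow.mpr ⟨even_two, n.pos.ne'⟩
  exact (Nat.not_odd_iff_even.mpr heven) hodd

/-- If `⟨u⟩` is an external point of the conic `C` in `π`, then `-F₀(u)` is a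
nonzero square. -/
lemma setE_square {F : Type} [Field F] {u : Fin 4 → F} (hu0 : u ≠ 0) (hu3 : u 3 = 0)
    (hE : Submodule.span F {u} ∈ setE F) :
    ∃ s : F, s ≠ 0 ∧ Fq F 0 u = -s ^ 2 := by
  obtain ⟨hpt, hpi, hnc, hcnt⟩ := hE
  have huf : Fq F 0 u ≠ 0 := by
    intro h
    exact hnc ⟨⟨hpt, (span_mem_quadric_iff 0 u hu0).mpr h⟩, hpi⟩
  have hcnt' : ({m | m ∈ lineL1 F ∧ Submodule.span F {u} ≤ m}).ncard ≠ 0 := by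
    rw [hcnt]; norm_num
  obtain ⟨m, ⟨⟨hmline, hmpi, hm1⟩, hum⟩⟩ := Set.nonempty_of_ncard_ne_zero hcnt' 
  obtain ⟨Q, hQ⟩ := Set.ncard_eq_one.mp hm1
  have hQmem : Q ∈ conicC F ∧ Q ≤ m := by
    have : Q ∈ {P | P ∈ conicC F ∧ P ≤ m} := by rw [hQ]; exact rfl
    exact this
  obtain ⟨⟨⟨hQpt, hQF⟩, hQpi⟩, hQm⟩ := hQmem
  obtain ⟨c, hc0, rfl⟩ := point_gen Q hQpt
  have hcF : Fq F 0 c = 0 := hQF c (Submodule.mem_span_singleton_self c)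
  have hc3 : c 3 = 0 := hQpi (Submodule.mem_span_singleton_self c)
  have hum' : u ∈ m := hum (Submodule.mem_span_singleton_self u)
  have hcm : c ∈ m := hQm (Submodule.mem_span_singleton_self c)
  have hcF' : c 0 * c 2 - c 1 ^ 2 = 0 := by
    have := hcF; simp only [Fq] at this; linear_combination this
  -- the polar condition
  have hB : c 0 * u 2 + c 2 * u 0 - 2 * (c 1 * u 1) = 0 := by
    by_contra hB
    set B := c 0 * u 2 + c 2 * u 0 - 2 * (c 1 * u 1) with hBdef
    set t := -B / Fq F 0 u with htdef
    have ht0 : t ≠ 0 := div_ne_zero (neg_ne_zero.mpr hB) huf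
    have htB : t * Fq F 0 u = -B := by
      rw [htdef]; field_simp
    have hFv : Fq F 0 (c + t • u) = 0 := by
      rw [fq_add_smul 0 t c u hu3, hcF, ← hBdef]
      linear_combination t * htB
    have hv0 : c + t • u ≠ 0 := by
      intro h
      have hceq : c = (-t) • u := by
        rw [neg_smul]
        linear_combination (norm := module) h
      rw [hceq, fq_smul] at hcF
      rcases mul_eq_zero.mp hcF with h' | h'
      · exact ht0 (neg_eq_zero.mp (pow_eq_zero_iff (n := 2) (by norm_num) |>.mp h'))
      · exact huf h'
    have hv3 : (c + t • u) 3 = 0 := by simp [hc3, hu3]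
    have hvmem : Submodule.span F {c + t • u} ∈ {P | P ∈ conicC F ∧ P ≤ m} := by
      refine ⟨⟨⟨point_span _ hv0, (span_mem_quadric_iff 0 _ hv0).mpr hFv⟩, ?_⟩, ?_⟩
      · rw [Submodule.span_le, Set.singleton_subset_iff]; exact hv3
      · rw [Submodule.span_le, Set.singleton_subset_iff]
        exact m.add_mem hcm (m.smul_mem t hum')
    rw [hQ, Set.mem_singleton_iff] at hvmem
    rw [Submodule.span_singleton_eq_span_singleton] at hvmem
    obtain ⟨z, hz⟩ := hvmem
    have heq : ((z : F) - 1) • c = (-((z : F) * t)) • u := by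
      funext i
      have := congrFun hz i
      simp only [Units.smul_def, Pi.smul_apply, Pi.add_apply, smul_eq_mul] at this ⊢
      linear_combination this
    have h1 : Fq F 0 (((z : F) - 1) • c) = 0 := by rw [fq_smul, hcF, mul_zero]
    rw [heq, fq_smul] at h1
    rcases mul_eq_zero.mp h1 with h' | h'
    · have : -((z : F) * t) = 0 := pow_eq_zero_iff (n := 2) (by norm_num) |>.mp h'
      rcases mul_eq_zero.mp (neg_eq_zero.mp this) with h'' | h''
      · exact z.ne_zero h''
      · exact ht0 h''
    · exact huf h'
  -- now produce the square root
  by_cases hc0' : c 0 = 0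
  · have hc1 : c 1 = 0 := by
      have : c 1 ^ 2 = 0 := by linear_combination -hcF' + u 2 * 0 + (by rw [hc0'] : c 0 = 0) * c 2
      exact pow_eq_zero_iff (n := 2) (by norm_num) |>.mp this
    have hc2 : c 2 ≠ 0 := by
      intro h
      apply hc0
      funext i
      fin_cases i <;> simp [hc0', hc1, h, hc3]
    have hu0' : u 0 = 0 := by
      have := hB
      rw [hc0', hc1] at this
      simp only [zero_mul, mul_zero, zero_add, sub_zero] at this
      rcases mul_eq_zero.mp this with h' | h'
      · exact absurd h' hc2
      · exact h'
    refine ⟨u 1, ?_, ?_⟩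
    · intro h
      apply huf
      simp only [Fq, hu0', h, hu3]; ring
    · simp only [Fq, hu0', hu3]; ring
  · refine ⟨(c 0 * u 1 - c 1 * u 0) / c 0, ?_, ?_⟩
    · intro h
      apply huf
      have hnum : c 0 * u 1 - c 1 * u 0 = 0 := by
        field_simp at h
        rw [mul_zero] at h
        exact h
      have key : Fq F 0 u * c 0 ^ 2 = -(c 0 * u 1 - c 1 * u 0) ^ 2 := by
        simp only [Fq, hu3]
        linear_combination (u 0 * c 0) * hB - (u 0 ^ 2) * hcF'
      rw [hnum] at key
      have key' : Fq F 0 u * c 0 ^ 2 = 0 := by rw [key]; ring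
      rcases mul_eq_zero.mp key' with h' | h'
      · exact h'
      · exact absurd (pow_eq_zero_iff (n := 2) (by norm_num) |>.mp h') hc0'
    · have key : Fq F 0 u * c 0 ^ 2 = -(c 0 * u 1 - c 1 * u 0) ^ 2 := by
        simp only [Fq, hu3]
        linear_combination (u 0 * c 0) * hB - (u 0 ^ 2) * hcF'
      field_simp
      linear_combination key

end S9aux

namespace S9aux

/-- On a tangent line to the cone, the polar form of the tangency direction `w`
with the direction `u` of the external point vanishes. -/
lemma tangent_polar_zero {F : Type} [Field F] (l : Submodule F (Fin 4 → F))
    (hl : isLine F l) {u w : Fin 4 → F}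
    (hul : u ∈ l) (hwl : w ∈ l) (hu0 : u ≠ 0) (hu3 : u 3 = 0) (hw3 : w 3 ≠ 0)
    (huf : Fq F 0 u ≠ 0) (hwF : Fq F 0 w = 0) (htan : tangentTo F l 0) :
    w 0 * u 2 + w 2 * u 0 - 2 * (w 1 * u 1) = 0 := by
  by_contra hB
  set B := w 0 * u 2 + w 2 * u 0 - 2 * (w 1 * u 1) with hBdef
  set t := -B / Fq F 0 u with htdef
  have ht0 : t ≠ 0 := div_ne_zero (neg_ne_zero.mpr hB) huf
  have hq := qpts_eq 0 l hl u w hul hwl hu0 hu3 hw3 huf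
  obtain ⟨W, hW⟩ := Set.ncard_eq_one.mp htan
  have h1 : Submodule.span F {w} ∈ qpts F 0 l := by
    rw [hq]
    exact ⟨0, by simpa using hwF, by simp⟩
  have htB : t * Fq F 0 u = -B := by rw [htdef]; field_simp
  have hFt : Fq F 0 (w + t • u) = 0 := by
    rw [fq_add_smul 0 t w u hu3, hwF, ← hBdef]
    linear_combination t * htB
  have h2 : Submodule.span F {w + t • u} ∈ qpts F 0 l := by
    rw [hq]
    exact ⟨t, hFt, rfl⟩
  rw [hW, Set.mem_singleton_iff] at h1 h2
  have : Submodule.span F {w + t • u} = Submodule.span F {w + (0 : F) • u} := by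
    rw [h2, ← h1]
    congr 1
    simp
  exact ht0 (span_param_inj hu0 hu3 hw3 this)

end S9aux

open S9aux

theorem statement_9 {F : Type} [Field F] [Fintype F] (q : ℕ)
    (hq : Fintype.card F = q) (hodd : Odd q) :
    ∀ l ∈ lineL4 F,
      (∀ lam : F, lam ≠ 0 → IsSquare lam → secantTo F l lam) ∧
      (∀ lam : F, ¬ IsSquare lam → externalTo F l lam) := by
  intro l hl
  obtain ⟨hline, hU4, htan, hE⟩ := hl
  have h2 : (2 : F) ≠ 0 := two_ne_zero_of_odd_card (by rw [hq]; exact hodd)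
  -- the external point and its direction u
  obtain ⟨u, hu0, hPu⟩ := point_gen _ hE.1
  have humem : u ∈ l ⊓ planePi F := hPu ▸ Submodule.mem_span_singleton_self u
  have hul : u ∈ l := humem.1
  have hu3 : u 3 = 0 := humem.2
  rw [hPu] at hE
  obtain ⟨s, hs0, hsq⟩ := setE_square hu0 hu3 hE
  have huf : Fq F 0 u ≠ 0 := by
    rw [hsq]
    exact neg_ne_zero.mpr (pow_ne_zero 2 hs0)
  -- the tangency point and its direction w
  obtain ⟨W, hW⟩ := Set.ncard_eq_one.mp htan
  have hWmem : W ∈ qpts F 0 l := by rw [hW]; exact rfl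
  obtain ⟨⟨hWpt, hWF⟩, hWle⟩ := hWmem
  obtain ⟨w, hw0, rfl⟩ := point_gen W hWpt
  have hwF : Fq F 0 w = 0 := hWF w (Submodule.mem_span_singleton_self w)
  have hwl : w ∈ l := hWle (Submodule.mem_span_singleton_self w)
  have hw3 : w 3 ≠ 0 := by
    intro h3
    have : w ∈ l ⊓ planePi F := ⟨hwl, h3⟩
    rw [hPu] at this
    obtain ⟨a, rfl⟩ := Submodule.mem_span_singleton.mp this
    have ha : a ≠ 0 := by rintro rfl; rw [zero_smul] at hw0; exact hw0 rfl
    rw [fq_smul] at hwF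
    rcases mul_eq_zero.mp hwF with h' | h'
    · exact ha (pow_eq_zero_iff (n := 2) (by norm_num) |>.mp h')
    · exact huf h'
  have hB := tangent_polar_zero l hline hul hwl hu0 hu3 hw3 huf hwF htan
  -- the evaluation of Fq lam along the line
  have hwlam : ∀ lam : F, Fq F lam w = lam * w 3 ^ 2 := by
    intro lam
    have := hwF
    simp only [Fq] at this ⊢
    linear_combination this
  have heval : ∀ lam t : F, Fq F lam (w + t • u) = lam * w 3 ^ 2 - s ^ 2 * t ^ 2 := by
    intro lam t
    rw [fq_add_smul lam t w u hu3, hB, hwlam, hsq]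
    ring
  have huflam : ∀ lam : F, Fq F lam u ≠ 0 := by
    intro lam
    rw [fq_lam_of_pi lam u hu3]
    exact huf
  constructor
  · -- secant for nonzero squares
    intro lam hlam0 hlamsq
    obtain ⟨r, hr⟩ := hlamsq
    have hr0 : r ≠ 0 := by rintro rfl; rw [mul_zero] at hr; exact hlam0 hr
    obtain ⟨t₁, ht₁def⟩ : ∃ t₁ : F, t₁ = r * w 3 / s := ⟨_, rfl⟩
    have ht₁0 : t₁ ≠ 0 := by rw [ht₁def]; exact div_ne_zero (mul_ne_zero hr0 hw3) hs0
    have hst₁ : s * t₁ = r * w 3 := by rw [ht₁def]; field_simp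
    have hq := qpts_eq lam l hline u w hul hwl hu0 hu3 hw3 (huflam lam)
    rw [secantTo, hq]
    have hset : {P | ∃ t : F, Fq F lam (w + t • u) = 0 ∧ P = Submodule.span F {w + t • u}} =
        {Submodule.span F {w + t₁ • u}, Submodule.span F {w + (-t₁) • u}} := by
      ext P
      simp only [Set.mem_setOf_eq, Set.mem_insert_iff, Set.mem_singleton_iff]
      constructor
      · rintro ⟨t, hFt, rfl⟩
        rw [heval] at hFt
        have hfac : (s * t - r * w 3) * (s * t + r * w 3) = 0 := by
          linear_combination (-1 : F) * hFt + w 3 ^ 2 * hr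
        rcases mul_eq_zero.mp hfac with h' | h'
        · left
          have ht : t = t₁ := by
            have : s * t = s * t₁ := by rw [hst₁]; linear_combination h'
            exact mul_left_cancel₀ hs0 this
          rw [ht]
        · right
          have ht : t = -t₁ := by
            have : s * t = s * (-t₁) := by
              rw [mul_neg, hst₁]; linear_combination h'
            exact mul_left_cancel₀ hs0 this
          rw [ht]
      · rintro (rfl | rfl)
        · exact ⟨t₁, by rw [heval]; linear_combination w 3 ^ 2 * hr - (s * t₁ + r * w 3) * hst₁, rfl⟩
        · exact ⟨-t₁, by rw [heval]; linear_combination w 3 ^ 2 * hr - (s * t₁ + r * w 3) * hst₁, rfl⟩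
    rw [hset]
    apply Set.ncard_pair
    intro hcontra
    have := span_param_inj hu0 hu3 hw3 hcontra
    have h2t : (2 : F) * t₁ = 0 := by linear_combination this
    rcases mul_eq_zero.mp h2t with h' | h'
    · exact h2 h'
    · exact ht₁0 h'
  · -- external for nonsquares
    intro lam hns
    have hq := qpts_eq lam l hline u w hul hwl hu0 hu3 hw3 (huflam lam)
    rw [externalTo, hq]
    have hset : {P | ∃ t : F, Fq F lam (w + t • u) = 0 ∧ P = Submodule.span F {w + t • u}} = ∅ := by
      rw [Set.eq_empty_iff_forall_notMem]
      rintro P ⟨t, hFt, rfl⟩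
      rw [heval] at hFt
      apply hns
      refine ⟨s * t / w 3, ?_⟩
      field_simp
      linear_combination hFt
    rw [hset]
    exact Set.ncard_empty _
end
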